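/- Let H be a pencilled hfd line set in PG(5,K) whose vertices are all collinear, i.e. there is a 2-dimensional subspace of V containing every vertex of H. Then there is a line D (2-dimensional subspace of V) such that the set of vertices of H is exactly the set of all points of D, the line D itself belongs to H, and H has at least two distinct carrier planes. -/

import Mathlib

/-- The Klein quadratic form on `K^6`. -/
def kleinQ {K : Type*} [Field K] (x : Fin 6 → K) : K :=
  x 0 * x 1 + x 2 * x 3 + x 4 * x 5

/-- The polar bilinear form `B(x,y) = Q(x+y) - Q(x) - Q(y)`. -/
def kleinB {K : Type*} [Field K] (x y : Fin 6 → K) : K :=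
  kleinQ (x + y) - kleinQ x - kleinQ y

/-- The polar subspace `π₅(S)` of a subspace `S`. -/
def kleinPolar {K : Type*} [Field K] (S : Submodule K (Fin 6 → K)) :
    Submodule K (Fin 6 → K) where
  carrier := {y | ∀ s ∈ S, kleinB s y = 0}
  add_mem' := by
    intro a b ha hb s hs
    have h1 := ha s hs
    have h2 := hb s hs
    simp only [kleinB, kleinQ, Pi.add_apply] at *
    linear_combination h1 + h2
  zero_mem' := by
    intro s hs
    simp [kleinB, kleinQ]
  smul_mem' := by
    intro c a ha s hs
    have h1 := ha s hs
    simp only [kleinB, kleinQ, Pi.add_apply, Pi.smul_apply, smul_eq_mul] at *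
    linear_combination c * h1

/-- `τ` is a tangent hyperplane of the Klein quadric. -/
def IsTangentHyperplane {K : Type*} [Field K] (τ : Submodule K (Fin 6 → K)) : Prop :=
  ∃ x : Fin 6 → K, x ≠ 0 ∧ kleinQ x = 0 ∧ τ = kleinPolar (Submodule.span K {x})

/-- A subspace is external to the Klein quadric. -/
def IsExternal {K : Type*} [Field K] (S : Submodule K (Fin 6 → K)) : Prop :=
  ∀ s ∈ S, s ≠ 0 → kleinQ s ≠ 0

/-- A `0`-secant of the Klein quadric: an external line. -/
def IsSecant {K : Type*} [Field K] (G : Submodule K (Fin 6 → K)) : Prop :=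
  Module.finrank K G = 2 ∧ IsExternal G

/-- The pencil of lines with vertex `v` and carrier plane `κ`. -/
def pencil {K : Type*} [Field K] (v κ : Submodule K (Fin 6 → K)) :
    Set (Submodule K (Fin 6 → K)) :=
  {X | Module.finrank K X = 2 ∧ v ≤ X ∧ X ≤ κ}

/-- An hfd line set: a set of `0`-secants such that every tangent hyperplane
contains exactly one member. -/
def IsHfd {K : Type*} [Field K] (H : Set (Submodule K (Fin 6 → K))) : Prop :=
  (∀ G ∈ H, IsSecant G) ∧
    ∀ τ : Submodule K (Fin 6 → K), IsTangentHyperplane τ → ∃! G, G ∈ H ∧ G ≤ τ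

/-- A pencilled hfd line set: every member lies in a pencil entirely contained in `H`. -/
def IsPencilledHfd {K : Type*} [Field K] (H : Set (Submodule K (Fin 6 → K))) : Prop :=
  IsHfd H ∧
    ∀ G ∈ H, ∃ v κ : Submodule K (Fin 6 → K), Module.finrank K v = 1 ∧
      Module.finrank K κ = 3 ∧ v ≤ κ ∧ pencil v κ ⊆ H ∧ G ∈ pencil v κ

/-- `v` is a vertex of the pencilled hfd line set `H`. -/
def IsVertex {K : Type*} [Field K] (H : Set (Submodule K (Fin 6 → K)))
    (v : Submodule K (Fin 6 → K)) : Prop :=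
  Module.finrank K v = 1 ∧ ∃ κ : Submodule K (Fin 6 → K),
    Module.finrank K κ = 3 ∧ v ≤ κ ∧ pencil v κ ⊆ H

/-- `κ` is a carrier plane of the pencilled hfd line set `H`. -/
def IsCarrier {K : Type*} [Field K] (H : Set (Submodule K (Fin 6 → K)))
    (κ : Submodule K (Fin 6 → K)) : Prop :=
  Module.finrank K κ = 3 ∧ ∃ v : Submodule K (Fin 6 → K),
    Module.finrank K v = 1 ∧ v ≤ κ ∧ pencil v κ ⊆ H


section Vec
variable {α : Type*} {m : ℕ}

@[simp]
lemma cons_val_five' (x : α) (u : Fin (m + 5) → α) :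
    Matrix.vecCons x u 5
      = Matrix.vecHead (Matrix.vecTail (Matrix.vecTail (Matrix.vecTail (Matrix.vecTail u)))) :=
  rfl

end Vec

section Helpers
variable {K : Type*} [Field K]

lemma kleinB_eval (x y : Fin 6 → K) :
    kleinB x y = x 0 * y 1 + x 1 * y 0 + x 2 * y 3 + x 3 * y 2 + x 4 * y 5 + x 5 * y 4 := by
  simp only [kleinB, kleinQ, Pi.add_apply]; ring

lemma kleinB_comm (x y : Fin 6 → K) : kleinB x y = kleinB y x := by
  rw [kleinB_eval, kleinB_eval]; ring

lemma kleinB_smul_right (c : K) (x y : Fin 6 → K) : kleinB x (c • y) = c * kleinB x y := by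
  simp only [kleinB_eval, Pi.smul_apply, smul_eq_mul]; ring

lemma kleinB_add_right (x y z : Fin 6 → K) : kleinB x (y + z) = kleinB x y + kleinB x z := by
  simp only [kleinB_eval, Pi.add_apply]; ring

def kleinBLin (x : Fin 6 → K) : (Fin 6 → K) →ₗ[K] K where
  toFun y := kleinB x y
  map_add' y z := kleinB_add_right x y z
  map_smul' c y := by simp [kleinB_smul_right]

@[simp] lemma kleinBLin_apply (x y : Fin 6 → K) : kleinBLin x y = kleinB x y := rfl

lemma mem_polar_span_iff (x y : Fin 6 → K) :
    y ∈ kleinPolar (Submodule.span K {x}) ↔ kleinB x y = 0 := by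
  constructor
  · intro h
    exact h x (Submodule.mem_span_singleton_self x)
  · intro h s hs
    rw [Submodule.mem_span_singleton] at hs
    obtain ⟨c, rfl⟩ := hs
    rw [kleinB_comm, kleinB_smul_right, kleinB_comm, h, mul_zero]

/-- A nonzero vector of a 1-dimensional submodule spans it. -/
lemma span_eq_of_mem {v : Submodule K (Fin 6 → K)} (hv : Module.finrank K v = 1)
    {s : Fin 6 → K} (hs : s ∈ v) (hs0 : s ≠ 0) : v = Submodule.span K {s} := by
  have hle : Submodule.span K {s} ≤ v := by
    rw [Submodule.span_le, Set.singleton_subset_iff]; exact hs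
  have := finrank_span_singleton (K := K) hs0
  exact (Submodule.eq_of_le_of_finrank_le hle (by omega)).symm

lemma exists_gen {v : Submodule K (Fin 6 → K)} (hv : Module.finrank K v = 1) :
    ∃ u : Fin 6 → K, u ≠ 0 ∧ v = Submodule.span K {u} := by
  have hbot : v ≠ ⊥ := by
    intro h
    rw [h, finrank_bot] at hv
    omega
  obtain ⟨u, hu, hu0⟩ := Submodule.exists_mem_ne_zero_of_ne_bot hbot
  exact ⟨u, hu0, span_eq_of_mem hv hu hu0⟩

end Helpers

section Helpers2
variable {K : Type*} [Field K]

/-- Two distinct 1-dim submodules span a 2-dim one. -/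
lemma finrank_sup_two {p q : Submodule K (Fin 6 → K)} (hp : Module.finrank K p = 1)
    (hq : Module.finrank K q = 1) (hne : p ≠ q) : Module.finrank K ↥(p ⊔ q) = 2 := by
  have hinf : p ⊓ q = ⊥ := by
    by_contra h
    obtain ⟨s, hs, hs0⟩ := Submodule.exists_mem_ne_zero_of_ne_bot h
    have h1 : p = Submodule.span K {s} := span_eq_of_mem hp hs.1 hs0
    have h2 : q = Submodule.span K {s} := span_eq_of_mem hq hs.2 hs0
    exact hne (h1.trans h2.symm)
  have := Submodule.finrank_sup_add_finrank_inf_eq p q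
  rw [hinf, finrank_bot] at this
  omega

/-- If a submodule of dimension 1 sits in one of dim ≥ 2, there is an element outside. -/
lemma exists_mem_notin {p W : Submodule K (Fin 6 → K)} (hle : p ≤ W)
    (h : Module.finrank K p < Module.finrank K W) : ∃ y, y ∈ W ∧ y ∉ p := by
  have hlt : p < W := lt_of_le_of_ne hle (by rintro rfl; omega)
  exact SetLike.exists_of_lt hlt

/-- Construct a member of a pencil inside a given tangent hyperplane. -/
lemma pencil_member_in_tangent {v κ : Submodule K (Fin 6 → K)}
    (hv : Module.finrank K v = 1) (hκ : Module.finrank K κ = 3) (hvκ : v ≤ κ)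
    {x : Fin 6 → K} (hperp : ∀ s ∈ v, kleinB x s = 0) :
    ∃ X, X ∈ pencil v κ ∧ X ≤ kleinPolar (Submodule.span K {x}) := by
  classical
  have hN : True := trivial
  have hNrank : 5 ≤ Module.finrank K ↥(LinearMap.ker (kleinBLin x)) := by
    have h1 := LinearMap.finrank_range_add_finrank_ker (kleinBLin x)
    have h2 : Module.finrank K (LinearMap.range (kleinBLin x)) ≤ 1 := by
      have := Submodule.finrank_le (LinearMap.range (kleinBLin x))
      simpa using this
    have h3 : Module.finrank K (Fin 6 → K) = 6 := by simp [Module.finrank_pi]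
    omega
  have hWdef : True := trivial
  have hvW : v ≤ κ ⊓ LinearMap.ker (kleinBLin x) := by
    refine le_inf hvκ ?_
    intro s hs
    simpa [LinearMap.mem_ker] using hperp s hs
  have hWrank : 2 ≤ Module.finrank K ↥(κ ⊓ LinearMap.ker (kleinBLin x)) := by
    have hsup := Submodule.finrank_sup_add_finrank_inf_eq κ (LinearMap.ker (kleinBLin x))
    have hle6 : Module.finrank K ↥(κ ⊔ LinearMap.ker (kleinBLin x)) ≤ 6 := by
      have := Submodule.finrank_le (κ ⊔ LinearMap.ker (kleinBLin x))
      have h3 : Module.finrank K (Fin 6 → K) = 6 := by simp [Module.finrank_pi]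
      omega
    omega
  obtain ⟨y, hyW, hyv⟩ := exists_mem_notin hvW (by omega)
  have hy0 : y ≠ 0 := fun h => hyv (h ▸ v.zero_mem)
  refine ⟨v ⊔ Submodule.span K {y}, ⟨?_, le_sup_left, ?_⟩, ?_⟩
  · -- finrank = 2
    have hspan : Module.finrank K (Submodule.span K {y}) = 1 := finrank_span_singleton hy0
    refine finrank_sup_two hv hspan ?_
    intro h
    exact hyv (h ▸ Submodule.mem_span_singleton_self y)
  · -- ≤ κ
    refine sup_le hvκ ?_
    rw [Submodule.span_le, Set.singleton_subset_iff]
    exact hyW.1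
  · -- ≤ polar
    intro g hg
    rw [Submodule.mem_sup] at hg
    obtain ⟨s, hs, t, ht, rfl⟩ := hg
    rw [mem_polar_span_iff]
    rw [Submodule.mem_span_singleton] at ht
    obtain ⟨c, rfl⟩ := ht
    rw [kleinB_add_right, kleinB_smul_right, hperp s hs]
    have : kleinB x y = 0 := by simpa [LinearMap.mem_ker] using hyW.2
    rw [this, mul_zero, add_zero]

/-- Every tangent hyperplane determined by a singular vector `x` contains a member whose
vertex is orthogonal to `x`. -/
lemma vertex_of_singular {H : Set (Submodule K (Fin 6 → K))} (hH : IsPencilledHfd H)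
    {x : Fin 6 → K} (hx0 : x ≠ 0) (hQ : kleinQ x = 0) :
    ∃ v, IsVertex H v ∧ ∀ s ∈ v, kleinB x s = 0 := by
  obtain ⟨G, ⟨hGH, hGτ⟩, -⟩ := hH.1.2 (kleinPolar (Submodule.span K {x})) ⟨x, hx0, hQ, rfl⟩
  obtain ⟨v, κ, hv1, hκ3, hvκ, hpen, hGpen⟩ := hH.2 G hGH
  refine ⟨v, ⟨hv1, κ, hκ3, hvκ, hpen⟩, ?_⟩
  intro s hs
  have : s ∈ kleinPolar (Submodule.span K {x}) := hGτ (hGpen.2.1 hs)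
  rw [mem_polar_span_iff] at this
  exact this

end Helpers2

section Helpers3
variable {K : Type*} [Field K]

/-- Two linear conditions on `K³` have a common nonzero solution. -/
lemma exists_common_kernel (a b : Fin 3 → K) :
    ∃ c : Fin 3 → K, c ≠ 0 ∧ a 0 * c 0 + a 1 * c 1 + a 2 * c 2 = 0 ∧
      b 0 * c 0 + b 1 * c 1 + b 2 * c 2 = 0 := by
  classical
  set M : Matrix (Fin 2) (Fin 3) K := ![![a 0, a 1, a 2], ![b 0, b 1, b 2]] with hM
  have hnotinj : ¬ Function.Injective M.mulVecLin := by
    intro hinj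
    have := LinearMap.finrank_le_finrank_of_injective hinj
    simp [Module.finrank_pi] at this
  rw [Function.not_injective_iff] at hnotinj
  obtain ⟨c₁, c₂, hc, hne⟩ := hnotinj
  refine ⟨c₁ - c₂, sub_ne_zero_of_ne hne, ?_, ?_⟩
  · have h0 := congrFun (by rw [map_sub, hc, sub_self] : M.mulVecLin (c₁ - c₂) = 0) 0
    rw [Matrix.mulVecLin_apply] at h0
    simp [hM, Matrix.mulVecLin_apply, Matrix.mulVec, dotProduct,
      Fin.sum_univ_three] at h0
    simp only [Pi.sub_apply]
    linear_combination h0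
  · have h1 := congrFun (by rw [map_sub, hc, sub_self] : M.mulVecLin (c₁ - c₂) = 0) 1
    rw [Matrix.mulVecLin_apply] at h1
    simp [hM, Matrix.mulVecLin_apply, Matrix.mulVec, dotProduct,
      Fin.sum_univ_three] at h1
    simp only [Pi.sub_apply]
    linear_combination h1

/-- Key quadratic-geometry lemma: given an external pair `u, w`, there is a singular
vector orthogonal to `u` but not to `w`. -/
lemma exists_singular_perp_first {u w : Fin 6 → K} (hQu : kleinQ u ≠ 0)
    (hind : ∀ c : K, w ≠ c • u)
    (hext : ∀ a b : K, a • u + b • w ≠ 0 → kleinQ (a • u + b • w) ≠ 0) :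
    ∃ x : Fin 6 → K, kleinQ x = 0 ∧ kleinB u x = 0 ∧ kleinB w x ≠ 0 := by
  by_cases h : ∃ α β γ : K, u 0 * α + u 2 * β + u 4 * γ = 0 ∧
      w 0 * α + w 2 * β + w 4 * γ ≠ 0
  · obtain ⟨α, β, γ, h1, h2⟩ := h
    refine ⟨![0, α, 0, β, 0, γ], by simp [kleinQ], ?_, ?_⟩
    · rw [kleinB_eval]
      simpa using h1
    · rw [kleinB_eval]
      simpa using h2
  · push_neg at h
    exfalso
    obtain ⟨μ, h0, h2, h4⟩ : ∃ μ : K, w 0 = μ * u 0 ∧ w 2 = μ * u 2 ∧ w 4 = μ * u 4 := by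
      by_cases h00 : u 0 ≠ 0
      · refine ⟨w 0 / u 0, (div_mul_cancel₀ (w 0) h00).symm, ?_, ?_⟩
        · have := h (u 2) (-(u 0)) 0 (by ring)
          rw [div_mul_eq_mul_div, eq_div_iff h00]
          linear_combination -this
        · have := h (u 4) 0 (-(u 0)) (by ring)
          rw [div_mul_eq_mul_div, eq_div_iff h00]
          linear_combination -this
      · by_cases h22 : u 2 ≠ 0
        · refine ⟨w 2 / u 2, ?_, (div_mul_cancel₀ (w 2) h22).symm, ?_⟩
          · have := h (-(u 2)) (u 0) 0 (by ring)
            rw [div_mul_eq_mul_div, eq_div_iff h22]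
            linear_combination -this
          · have := h 0 (u 4) (-(u 2)) (by ring)
            rw [div_mul_eq_mul_div, eq_div_iff h22]
            linear_combination -this
        · by_cases h44 : u 4 ≠ 0
          · refine ⟨w 4 / u 4, ?_, ?_, (div_mul_cancel₀ (w 4) h44).symm⟩
            · have := h (-(u 4)) 0 (u 0) (by ring)
              rw [div_mul_eq_mul_div, eq_div_iff h44]
              linear_combination -this
            · have := h 0 (-(u 4)) (u 2) (by ring)
              rw [div_mul_eq_mul_div, eq_div_iff h44]
              linear_combination -this
          · push_neg at h00 h22 h44
            exact absurd (show kleinQ u = 0 by simp [kleinQ, h00, h22, h44]) hQu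
    have hz : (-μ) • u + (1 : K) • w ≠ 0 := by
      intro hz
      apply hind μ
      funext j
      have := congrFun hz j
      simp only [Pi.add_apply, Pi.smul_apply, smul_eq_mul, one_mul, Pi.zero_apply] at this
      simp only [Pi.smul_apply, smul_eq_mul]
      linear_combination this
    apply hext (-μ) 1 hz
    simp only [kleinQ, Pi.add_apply, Pi.smul_apply, smul_eq_mul, one_mul]
    linear_combination (-μ * u 1 + w 1) * h0 + (-μ * u 3 + w 3) * h2 + (-μ * u 5 + w 5) * h4

end Helpers3

/-- Main Theorem, part (c): collinear vertices.
If the vertices of a pencilled hfd line set `H` are all collinear, then there is a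
line `D` whose points are exactly the vertices of `H`, `D` itself belongs to `H`,
and `H` has at least two distinct carrier planes. -/
theorem collinear_vertices {K : Type*} [Field K]
    (H : Set (Submodule K (Fin 6 → K))) (hH : IsPencilledHfd H)
    (hc : ∃ L : Submodule K (Fin 6 → K), Module.finrank K L = 2 ∧
      ∀ v : Submodule K (Fin 6 → K), IsVertex H v → v ≤ L) :
    ∃ D : Submodule K (Fin 6 → K), Module.finrank K D = 2 ∧
      (∀ v : Submodule K (Fin 6 → K),
        IsVertex H v ↔ (Module.finrank K v = 1 ∧ v ≤ D)) ∧
      D ∈ H ∧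
      ∃ κ₁ κ₂ : Submodule K (Fin 6 → K),
        IsCarrier H κ₁ ∧ IsCarrier H κ₂ ∧ κ₁ ≠ κ₂ := by
  classical
  obtain ⟨L, hL2, hLv⟩ := hc
  -- Step A : two distinct vertices
  have he0ne : (![1,0,0,0,0,0] : Fin 6 → K) ≠ 0 := by
    intro h
    have := congrFun h 0
    simp at this
  obtain ⟨v₀, hv₀vert, hperp₀⟩ :=
    vertex_of_singular hH he0ne (by simp [kleinQ])
  have hv₀bot : v₀ ≠ ⊥ := by
    intro h
    have := hv₀vert.1
    rw [h, finrank_bot] at this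
    omega
  obtain ⟨b, hbv₀, hb0⟩ := Submodule.exists_mem_ne_zero_of_ne_bot hv₀bot
  obtain ⟨k, hk⟩ : ∃ k, b k ≠ 0 := by
    by_contra hcon
    push_neg at hcon
    exact hb0 (funext hcon)
  obtain ⟨e, he0, heQ, heB⟩ : ∃ e : Fin 6 → K, e ≠ 0 ∧ kleinQ e = 0 ∧ kleinB e b ≠ 0 := by
    fin_cases k
    · exact ⟨![0,1,0,0,0,0], by intro h; simpa using congrFun h 1, by simp [kleinQ],
        by rw [kleinB_eval]; simpa using hk⟩
    · exact ⟨![1,0,0,0,0,0], by intro h; simpa using congrFun h 0, by simp [kleinQ],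
        by rw [kleinB_eval]; simpa using hk⟩
    · exact ⟨![0,0,0,1,0,0], by intro h; simpa using congrFun h 3, by simp [kleinQ],
        by rw [kleinB_eval]; simpa using hk⟩
    · exact ⟨![0,0,1,0,0,0], by intro h; simpa using congrFun h 2, by simp [kleinQ],
        by rw [kleinB_eval]; simpa using hk⟩
    · exact ⟨![0,0,0,0,0,1], by intro h; simpa using congrFun h 5, by simp [kleinQ],
        by rw [kleinB_eval]; simpa using hk⟩
    · exact ⟨![0,0,0,0,1,0], by intro h; simpa using congrFun h 4, by simp [kleinQ],
        by rw [kleinB_eval]; simpa using hk⟩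
  obtain ⟨v₁, hv₁vert, hperp₁⟩ := vertex_of_singular hH he0 heQ
  have hvne : v₀ ≠ v₁ := by
    intro h
    exact heB (hperp₁ b (h ▸ hbv₀))
  -- Step B : v₀ ⊔ v₁ = L
  have hsupL : v₀ ⊔ v₁ = L := by
    refine Submodule.eq_of_le_of_finrank_le (sup_le (hLv v₀ hv₀vert) (hLv v₁ hv₁vert)) ?_
    rw [hL2, finrank_sup_two hv₀vert.1 hv₁vert.1 hvne]
  -- Step C : a singular vector orthogonal to both v₀ and v₁
  obtain ⟨u, hu0, hv₀span⟩ := exists_gen hv₀vert.1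
  obtain ⟨w, hw0, hv₁span⟩ := exists_gen hv₁vert.1
  obtain ⟨c, hc0, hcu, hcw⟩ := exists_common_kernel ![u 0, u 2, u 4] ![w 0, w 2, w 4]
  set x : Fin 6 → K := ![0, c 0, 0, c 1, 0, c 2] with hxdef
  have hx0 : x ≠ 0 := by
    intro h
    apply hc0
    funext i
    fin_cases i
    · simpa [hxdef] using congrFun h 1
    · simpa [hxdef] using congrFun h 3
    · simpa [hxdef] using congrFun h 5
  have hQx : kleinQ x = 0 := by simp [hxdef, kleinQ]
  have hBux : kleinB u x = 0 := by
    rw [kleinB_eval]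
    simpa [hxdef] using hcu
  have hBwx : kleinB w x = 0 := by
    rw [kleinB_eval]
    simpa [hxdef] using hcw
  -- Step D : L ∈ H
  obtain ⟨G, ⟨hGH, hGτ⟩, hGuniq⟩ :=
    hH.1.2 (kleinPolar (Submodule.span K {x})) ⟨x, hx0, hQx, rfl⟩
  have hmem : ∀ (v : Submodule K (Fin 6 → K)), IsVertex H v →
      (∀ s ∈ v, kleinB x s = 0) → v ≤ G := by
    intro v hvert hperp
    obtain ⟨hr1, κ, hκ3, hvκ, hpen⟩ := hvert
    obtain ⟨X, hXpen, hXτ⟩ := pencil_member_in_tangent hr1 hκ3 hvκ hperp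
    have : X = G := hGuniq X ⟨hpen hXpen, hXτ⟩
    exact this ▸ hXpen.2.1
  have hperpx₀ : ∀ s ∈ v₀, kleinB x s = 0 := by
    intro s hs
    rw [hv₀span, Submodule.mem_span_singleton] at hs
    obtain ⟨a, rfl⟩ := hs
    rw [kleinB_smul_right, kleinB_comm, hBux, mul_zero]
  have hperpx₁ : ∀ s ∈ v₁, kleinB x s = 0 := by
    intro s hs
    rw [hv₁span, Submodule.mem_span_singleton] at hs
    obtain ⟨a, rfl⟩ := hs
    rw [kleinB_smul_right, kleinB_comm, hBwx, mul_zero]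
  have hLG : L ≤ G := hsupL ▸ sup_le (hmem v₀ hv₀vert hperpx₀) (hmem v₁ hv₁vert hperpx₁)
  have hG2 : Module.finrank K G = 2 := (hH.1.1 G hGH).1
  have hLGeq : L = G := Submodule.eq_of_le_of_finrank_le hLG (by omega)
  have hLH : L ∈ H := hLGeq ▸ hGH
  -- backward direction : every point of L is a vertex
  have hback : ∀ p : Submodule K (Fin 6 → K),
      Module.finrank K p = 1 → p ≤ L → IsVertex H p := by
    intro p hp1 hpL
    obtain ⟨u', hu'0, hpspan⟩ := exists_gen hp1
    have hu'p : u' ∈ p := hpspan ▸ Submodule.mem_span_singleton_self u'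
    have hu'L : u' ∈ L := hpL hu'p
    obtain ⟨w', hw'L, hw'p⟩ := exists_mem_notin hpL (by omega)
    have hw'0 : w' ≠ 0 := fun h => hw'p (h ▸ p.zero_mem)
    have hLext : IsExternal L := (hH.1.1 L hLH).2
    have hQu' : kleinQ u' ≠ 0 := hLext u' hu'L hu'0
    have hind : ∀ a : K, w' ≠ a • u' := by
      intro a hcc
      exact hw'p (hcc ▸ p.smul_mem a hu'p)
    have hext' : ∀ a b : K, a • u' + b • w' ≠ 0 → kleinQ (a • u' + b • w') ≠ 0 :=
      fun a b hz => hLext _ (L.add_mem (L.smul_mem a hu'L) (L.smul_mem b hw'L)) hz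
    obtain ⟨y, hQy, hBu'y, hBw'y⟩ := exists_singular_perp_first hQu' hind hext'
    have hy0 : y ≠ 0 := by
      rintro rfl
      apply hBw'y
      rw [kleinB_eval]
      simp
    obtain ⟨v', hv'vert, hv'perp⟩ := vertex_of_singular hH hy0 hQy
    have hv'L : v' ≤ L := hLv v' hv'vert
    obtain ⟨s, hs0, hv'span⟩ := exists_gen hv'vert.1
    have hsv' : s ∈ v' := hv'span ▸ Submodule.mem_span_singleton_self s
    have hsL : s ∈ L := hv'L hsv'
    -- L = p ⊔ span w'
    have hLeq : p ⊔ Submodule.span K {w'} = L := by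
      refine Submodule.eq_of_le_of_finrank_le
        (sup_le hpL (by rw [Submodule.span_le, Set.singleton_subset_iff]; exact hw'L)) ?_
      rw [hL2, finrank_sup_two hp1 (finrank_span_singleton hw'0)]
      intro h
      exact hw'p (h ▸ Submodule.mem_span_singleton_self w')
    rw [← hLeq, Submodule.mem_sup] at hsL
    obtain ⟨a, hap, t, hts, rfl⟩ := hsL
    rw [Submodule.mem_span_singleton] at hts
    obtain ⟨d, rfl⟩ := hts
    have hBya : kleinB y a = 0 := by
      rw [hpspan, Submodule.mem_span_singleton] at hap
      obtain ⟨a', rfl⟩ := hap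
      rw [kleinB_smul_right, kleinB_comm, hBu'y, mul_zero]
    have hzero := hv'perp _ hsv'
    rw [kleinB_add_right, hBya, kleinB_smul_right, zero_add] at hzero
    have hByw' : kleinB y w' ≠ 0 := by
      rw [kleinB_comm]; exact hBw'y
    have hd0 : d = 0 := by
      rcases mul_eq_zero.mp hzero with h | h
      · exact h
      · exact absurd h hByw'
    rw [hd0, zero_smul, add_zero] at hsv' hs0 hv'span
    have hsp : a ∈ p := hap
    have hpeq : p = v' := by
      rw [span_eq_of_mem hp1 hsp hs0, ← hv'span]
    rw [hpeq]
    exact hv'vert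
  -- carrier planes
  obtain ⟨v₂, κ₀, hv₂1, hκ₀3, hv₂κ₀, hpen₀, hLpen₀⟩ := hH.2 L hLH
  have hLκ₀ : L ≤ κ₀ := hLpen₀.2.2
  have hcar₀ : IsCarrier H κ₀ := ⟨hκ₀3, v₂, hv₂1, hv₂κ₀, hpen₀⟩
  have hcar2 : ∃ κ₁ κ₂ : Submodule K (Fin 6 → K),
      IsCarrier H κ₁ ∧ IsCarrier H κ₂ ∧ κ₁ ≠ κ₂ := by
    by_contra hnc
    push_neg at hnc
    obtain ⟨w₀, hw₀κ₀, hw₀L⟩ := exists_mem_notin hLκ₀ (by omega)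
    have hw₀0 : w₀ ≠ 0 := fun h => hw₀L (h ▸ L.zero_mem)
    have hpenw : pencil (Submodule.span K {w₀}) κ₀ ⊆ H := by
      intro X hX
      obtain ⟨hX2, hwX, hXκ⟩ := hX
      -- X meets L nontrivially inside κ₀
      have hXL : X ⊓ L ≠ ⊥ := by
        intro h
        have hsup := Submodule.finrank_sup_add_finrank_inf_eq X L
        rw [h, finrank_bot] at hsup
        have hle : Module.finrank K ↥(X ⊔ L) ≤ 3 := by
          have := Submodule.finrank_mono (sup_le hXκ hLκ₀)
          omega
        omega
      obtain ⟨s, hsXL, hs0⟩ := Submodule.exists_mem_ne_zero_of_ne_bot hXL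
      have hsvert : IsVertex H (Submodule.span K {s}) :=
        hback _ (finrank_span_singleton hs0)
          (by rw [Submodule.span_le, Set.singleton_subset_iff]; exact hsXL.2)
      obtain ⟨hs1, κ', hκ'3, hsκ', hpen'⟩ := hsvert
      have hκ'eq : κ' = κ₀ := hnc κ' κ₀ ⟨hκ'3, _, hs1, hsκ', hpen'⟩ hcar₀
      apply hpen'
      refine ⟨hX2, ?_, hκ'eq ▸ hXκ⟩
      rw [Submodule.span_le, Set.singleton_subset_iff]
      exact hsXL.1
    have hw₀vert : IsVertex H (Submodule.span K {w₀}) :=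
      ⟨finrank_span_singleton hw₀0, κ₀, hκ₀3,
        by rw [Submodule.span_le, Set.singleton_subset_iff]; exact hw₀κ₀, hpenw⟩
    exact hw₀L (hLv _ hw₀vert (Submodule.mem_span_singleton_self w₀))
  refine ⟨L, hL2, ?_, hLH, hcar2⟩
  intro v
  constructor
  · intro hvert
    exact ⟨hvert.1, hLv v hvert⟩
  · rintro ⟨h1, h2⟩
    exact hback v h1 h2
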